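/- The unique minimizer of the function Z ↦ ‖Z‖_* + (c/2)‖Z − M‖_F² over matrices Z, where c > 0, is given by singular value thresholding: Z = U · max(S − 1/c, 0) · Vᵀ, where M = U S Vᵀ is a singular value decomposition of M. -/

import Mathlib

open Matrix

/-- The nuclear norm of a real matrix, defined by duality with the spectral
(ℓ²-operator) norm: `‖A‖_* = sup { ⟨A, B⟩_F : ‖B‖_op ≤ 1 }`. -/
noncomputable def nuclearNorm {n m : ℕ} (A : Matrix (Fin n) (Fin m) ℝ) : ℝ :=
  sSup {x : ℝ | ∃ B : Matrix (Fin n) (Fin m) ℝ,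
    (∀ v : EuclideanSpace ℝ (Fin m), ‖(Matrix.toEuclideanLin B) v‖ ≤ ‖v‖) ∧
    x = Matrix.trace (Aᵀ * B)}

lemma svt_feas_iff {n m : ℕ} (B : Matrix (Fin n) (Fin m) ℝ) :
    (∀ v : EuclideanSpace ℝ (Fin m), ‖(Matrix.toEuclideanLin B) v‖ ≤ ‖v‖) ↔
    (∀ y : Fin m → ℝ, ∑ i, (B.mulVec y i)^2 ≤ ∑ j, (y j)^2) := by
  constructor
  · intro h y
    have hle := h ((WithLp.equiv 2 (Fin m → ℝ)).symm y)
    rw [WithLp.equiv_symm_apply, Matrix.toEuclideanLin_apply_piLp_toLp] at hle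
    rw [EuclideanSpace.norm_eq, EuclideanSpace.norm_eq] at hle
    simp only [PiLp.toLp_apply, Real.norm_eq_abs, sq_abs] at hle
    calc ∑ i, (B.mulVec y i)^2
        = (Real.sqrt (∑ i, (B.mulVec y i)^2))^2 := (Real.sq_sqrt (by positivity)).symm
      _ ≤ (Real.sqrt (∑ j, (y j)^2))^2 := by
          apply pow_le_pow_left₀ (Real.sqrt_nonneg _) hle
      _ = ∑ j, (y j)^2 := Real.sq_sqrt (by positivity)
  · intro h v
    rw [Matrix.toEuclideanLin_apply, EuclideanSpace.norm_eq, EuclideanSpace.norm_eq]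
    apply Real.sqrt_le_sqrt
    simp only [PiLp.toLp_apply, Real.norm_eq_abs, sq_abs]
    exact h _

lemma svt_trace_form {n m : ℕ} (A B : Matrix (Fin n) (Fin m) ℝ) :
    Matrix.trace (Aᵀ * B) = ∑ i, ∑ j, A i j * B i j := by
  simp [Matrix.trace, Matrix.diag, Matrix.mul_apply]
  rw [Finset.sum_comm]

lemma svt_orth_invar {k : ℕ} (A : Matrix (Fin k) (Fin k) ℝ) (hA : Aᵀ * A = 1)
    (x : Fin k → ℝ) : ∑ i, (A.mulVec x i)^2 = ∑ j, (x j)^2 := by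
  have h1 : ∑ i, (A.mulVec x i)^2 = (A.mulVec x) ⬝ᵥ (A.mulVec x) := by
    simp [dotProduct, sq]
  have h2 : (A.mulVec x) ⬝ᵥ (A.mulVec x) = x ⬝ᵥ ((Aᵀ * A).mulVec x) := by
    rw [Matrix.dotProduct_mulVec, ← Matrix.mulVec_transpose, ← Matrix.mulVec_mulVec,
      dotProduct_comm, Matrix.dotProduct_mulVec, ← Matrix.mulVec_transpose]
  rw [h1, h2, hA, Matrix.one_mulVec]
  simp [dotProduct, sq]

lemma svt_diag_contract {n m : ℕ} (D : Matrix (Fin n) (Fin m) ℝ)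
    (hdiag : ∀ (i : Fin n) (j : Fin m), (i : ℕ) ≠ (j : ℕ) → D i j = 0)
    (hbd : ∀ i j, |D i j| ≤ 1) (y : Fin m → ℝ) :
    ∑ i, (D.mulVec y i)^2 ≤ ∑ j, (y j)^2 := by
  have key : ∀ i : Fin n, (D.mulVec y i)^2 = ∑ j, (D i j)^2 * (y j)^2 := by
    intro i
    rw [Matrix.mulVec, dotProduct, sq, Finset.sum_mul_sum]
    apply Finset.sum_congr rfl; intro j _
    rw [Finset.sum_eq_single j]
    · ring
    · intro k _ hk
      by_cases hij : (i : ℕ) = (j : ℕ)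
      · have hz : D i k = 0 := by
          apply hdiag; intro h; apply hk; apply Fin.ext; omega
        simp [hz]
      · have hz : D i j = 0 := hdiag i j hij
        simp [hz]
    · intro h; exact absurd (Finset.mem_univ j) h
  calc ∑ i, (D.mulVec y i)^2 = ∑ i, ∑ j, (D i j)^2 * (y j)^2 :=
        Finset.sum_congr rfl fun i _ => key i
    _ = ∑ j, (∑ i, (D i j)^2) * (y j)^2 := by
        rw [Finset.sum_comm]; simp [Finset.sum_mul]
    _ ≤ ∑ j, 1 * (y j)^2 := by
        apply Finset.sum_le_sum; intro j _
        apply mul_le_mul_of_nonneg_right _ (sq_nonneg _)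
        by_cases hjn : (j : ℕ) < n
        · rw [Finset.sum_eq_single ⟨(j : ℕ), hjn⟩]
          · have := hbd ⟨(j : ℕ), hjn⟩ j
            calc (D ⟨(j:ℕ), hjn⟩ j)^2 ≤ 1^2 := by
                  rw [← sq_abs]; exact pow_le_pow_left₀ (abs_nonneg _) this 2
              _ = 1 := one_pow 2
          · intro i _ hi
            have hij : (i : ℕ) ≠ (j : ℕ) := by
              intro h; apply hi; apply Fin.ext; simp [h]
            simp [hdiag i j hij]
          · intro h; exact absurd (Finset.mem_univ _) h
        · rw [Finset.sum_eq_zero]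
          · norm_num
          · intro i _
            have hij : (i : ℕ) ≠ (j : ℕ) := by omega
            simp [hdiag i j hij]
    _ = ∑ j, (y j)^2 := by simp

lemma svt_trace_conj {n m : ℕ} (U : Matrix (Fin n) (Fin n) ℝ) (V : Matrix (Fin m) (Fin m) ℝ)
    (A B : Matrix (Fin n) (Fin m) ℝ) :
    Matrix.trace ((U * A * Vᵀ)ᵀ * B) = Matrix.trace (Aᵀ * (Uᵀ * B * V)) := by
  have h : (U * A * Vᵀ)ᵀ = V * Aᵀ * Uᵀ := by
    simp [Matrix.transpose_mul, Matrix.mul_assoc]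
  rw [h]
  rw [Matrix.mul_assoc, Matrix.mul_assoc, Matrix.trace_mul_comm V]
  rw [← Matrix.mul_assoc, ← Matrix.mul_assoc, ← Matrix.mul_assoc]

lemma svt_entry_bound {n m : ℕ} (B : Matrix (Fin n) (Fin m) ℝ)
    (h : ∀ y : Fin m → ℝ, ∑ i, (B.mulVec y i)^2 ≤ ∑ j, (y j)^2) (i : Fin n) (j : Fin m) :
    |B i j| ≤ 1 := by
  have h1 := h (Pi.single j 1)
  have h2 : ∀ i', B.mulVec (Pi.single j 1) i' = B i' j := by
    intro i'; simp [Matrix.mulVec, dotProduct, Pi.single_apply]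
  rw [Finset.sum_congr rfl fun i' _ => by rw [h2 i']] at h1
  have h3 : ∑ j', ((Pi.single j 1 : Fin m → ℝ) j')^2 = 1 := by
    simp [Pi.single_apply]
  rw [h3] at h1
  have h4 : (B i j)^2 ≤ 1 := by
    calc (B i j)^2 ≤ ∑ i', (B i' j)^2 :=
          Finset.single_le_sum (f := fun i' => (B i' j)^2) (fun i' _ => sq_nonneg _)
            (Finset.mem_univ i)
      _ ≤ 1 := h1
  rw [abs_le_one_iff_mul_self_le_one]; nlinarith [h4]

lemma svt_conj_feas {n m : ℕ} (U : Matrix (Fin n) (Fin n) ℝ) (V : Matrix (Fin m) (Fin m) ℝ)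
    (B : Matrix (Fin n) (Fin m) ℝ)
    (hU : U * Uᵀ = 1) (hV : Vᵀ * V = 1)
    (h : ∀ y : Fin m → ℝ, ∑ i, (B.mulVec y i)^2 ≤ ∑ j, (y j)^2) :
    ∀ y : Fin m → ℝ, ∑ i, ((Uᵀ * B * V).mulVec y i)^2 ≤ ∑ j, (y j)^2 := by
  intro y
  have e1 : (Uᵀ * B * V).mulVec y = Uᵀ.mulVec (B.mulVec (V.mulVec y)) := by
    rw [Matrix.mulVec_mulVec, Matrix.mulVec_mulVec, Matrix.mul_assoc]
  rw [e1]
  rw [svt_orth_invar Uᵀ (by rw [Matrix.transpose_transpose]; exact hU) _]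
  calc ∑ i, (B.mulVec (V.mulVec y) i)^2 ≤ ∑ j, (V.mulVec y j)^2 := h _
    _ = ∑ j, (y j)^2 := svt_orth_invar V hV y

/-- The unique minimizer of `Z ↦ ‖Z‖_* + (c/2)‖Z − M‖_F²`, `c > 0`, is given by
singular value thresholding `Z = U (S − (1/c)I)₊ Vᵀ`, where `M = U S Vᵀ` is an SVD
of `M` (U, V orthogonal, S rectangular-diagonal with nonnegative entries). -/
theorem svt_is_unique_minimizer {n m : ℕ} (c : ℝ) (hc : 0 < c)
    (U : Matrix (Fin n) (Fin n) ℝ) (S : Matrix (Fin n) (Fin m) ℝ)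
    (V : Matrix (Fin m) (Fin m) ℝ)
    (M : Matrix (Fin n) (Fin m) ℝ)
    (hU : U * Uᵀ = 1 ∧ Uᵀ * U = 1) (hV : V * Vᵀ = 1 ∧ Vᵀ * V = 1)
    (hSdiag : ∀ (i : Fin n) (j : Fin m), (i : ℕ) ≠ (j : ℕ) → S i j = 0)
    (hSnonneg : ∀ i j, 0 ≤ S i j)
    (hM : M = U * S * Vᵀ) :
    ∀ Z : Matrix (Fin n) (Fin m) ℝ,
      Z ≠ U * (Matrix.of fun i j => max (S i j - 1 / c) 0) * Vᵀ →
      nuclearNorm (U * (Matrix.of fun i j => max (S i j - 1 / c) 0) * Vᵀ) +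
          c / 2 * ∑ i, ∑ j,
            ((U * (Matrix.of fun i j => max (S i j - 1 / c) 0) * Vᵀ) i j - M i j) ^ 2
        < nuclearNorm Z + c / 2 * ∑ i, ∑ j, (Z i j - M i j) ^ 2 := by
  intro Z hZ
  set Dh : Matrix (Fin n) (Fin m) ℝ := Matrix.of fun i j => max (S i j - 1 / c) 0 with hDh
  set Zh : Matrix (Fin n) (Fin m) ℝ := U * Dh * Vᵀ with hZh
  set E : Matrix (Fin n) (Fin m) ℝ := Matrix.of fun i j => c * (S i j - Dh i j) with hE
  set W : Matrix (Fin n) (Fin m) ℝ := U * E * Vᵀ with hW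
  have hc' : (0:ℝ) < 1 / c := by positivity
  -- basic entry facts about E
  have hcinv : c * (1/c) = 1 := mul_one_div_cancel hc.ne'
  have hEdiag : ∀ (i : Fin n) (j : Fin m), (i : ℕ) ≠ (j : ℕ) → E i j = 0 := by
    intro i j hij
    have hS0 : S i j = 0 := hSdiag i j hij
    have hd : Dh i j = 0 := by
      show max (S i j - 1/c) 0 = 0
      exact max_eq_right (by linarith)
    show c * (S i j - Dh i j) = 0
    rw [hd, hS0]; ring
  have hE01 : ∀ i j, 0 ≤ E i j ∧ E i j ≤ 1 := by
    intro i j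
    have hs := hSnonneg i j
    rcases le_or_gt (S i j) (1/c) with h | h
    · have hd : Dh i j = 0 := max_eq_right (by linarith)
      constructor
      · show 0 ≤ c * (S i j - Dh i j)
        rw [hd]
        exact mul_nonneg hc.le (by linarith)
      · show c * (S i j - Dh i j) ≤ 1
        rw [hd]
        have h1 : c * (S i j - 0) ≤ c * (1/c) := by
          apply mul_le_mul_of_nonneg_left (by linarith) hc.le
        linarith
    · have hd : Dh i j = S i j - 1/c := max_eq_left (by linarith)
      constructor
      · show 0 ≤ c * (S i j - Dh i j)
        rw [hd]
        have h1 : S i j - (S i j - 1/c) = 1/c := by ring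
        rw [h1]; positivity
      · show c * (S i j - Dh i j) ≤ 1
        rw [hd]
        have h1 : c * (S i j - (S i j - 1/c)) = c * (1/c) := by ring
        rw [h1, hcinv]
  have hEbd : ∀ i j, |E i j| ≤ 1 := by
    intro i j
    rcases hE01 i j with ⟨h0, h1⟩
    rw [abs_le]; exact ⟨by linarith, h1⟩
  -- W is feasible
  have hWsum : ∀ y : Fin m → ℝ, ∑ i, (W.mulVec y i)^2 ≤ ∑ j, (y j)^2 := by
    intro y
    have e1 : W.mulVec y = U.mulVec (E.mulVec (Vᵀ.mulVec y)) := by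
      rw [Matrix.mulVec_mulVec, Matrix.mulVec_mulVec, hW, Matrix.mul_assoc]
    rw [e1, svt_orth_invar U hU.2 _]
    calc ∑ i, (E.mulVec (Vᵀ.mulVec y) i)^2 ≤ ∑ j, (Vᵀ.mulVec y j)^2 :=
          svt_diag_contract E hEdiag hEbd _
      _ = ∑ j, (y j)^2 := svt_orth_invar Vᵀ (by rw [Matrix.transpose_transpose]; exact hV.1) y
  have hWfeas : ∀ v : EuclideanSpace ℝ (Fin m), ‖(Matrix.toEuclideanLin W) v‖ ≤ ‖v‖ :=
    (svt_feas_iff W).mpr hWsum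
  -- the dual set is bounded above
  have hbdd : ∀ A : Matrix (Fin n) (Fin m) ℝ, BddAbove {x : ℝ | ∃ B : Matrix (Fin n) (Fin m) ℝ,
      (∀ v : EuclideanSpace ℝ (Fin m), ‖(Matrix.toEuclideanLin B) v‖ ≤ ‖v‖) ∧
      x = Matrix.trace (Aᵀ * B)} := by
    intro A
    refine ⟨∑ i, ∑ j, |A i j|, ?_⟩
    rintro x ⟨B, hB, rfl⟩
    have hBsum := (svt_feas_iff B).mp hB
    rw [svt_trace_form]
    apply Finset.sum_le_sum; intro i _
    apply Finset.sum_le_sum; intro j _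
    calc A i j * B i j ≤ |A i j * B i j| := le_abs_self _
      _ = |A i j| * |B i j| := abs_mul _ _
      _ ≤ |A i j| * 1 := mul_le_mul_of_nonneg_left (svt_entry_bound B hBsum i j) (abs_nonneg _)
      _ = |A i j| := mul_one _
  -- lower bound: trace(Zᵀ W) ≤ nuclearNorm Z
  have hlow : ∀ A : Matrix (Fin n) (Fin m) ℝ, Matrix.trace (Aᵀ * W) ≤ nuclearNorm A := by
    intro A
    exact le_csSup (hbdd A) ⟨W, hWfeas, rfl⟩
  -- upper bound: nuclearNorm Zh ≤ trace(Zhᵀ W)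
  have hUtWV : Uᵀ * W * V = E := by
    rw [hW]
    calc Uᵀ * (U * E * Vᵀ) * V = (Uᵀ * U) * E * (Vᵀ * V) := by
          simp only [Matrix.mul_assoc]
      _ = E := by rw [hU.2, hV.2, Matrix.one_mul, Matrix.mul_one]
  have htrZhW : Matrix.trace (Zhᵀ * W) = ∑ i, ∑ j, Dh i j * E i j := by
    rw [hZh, svt_trace_conj, hUtWV, svt_trace_form]
  have hup : nuclearNorm Zh ≤ Matrix.trace (Zhᵀ * W) := by
    apply csSup_le
    · refine ⟨0, 0, ?_, ?_⟩
      · intro v; simp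
      · simp
    · rintro x ⟨B, hB, rfl⟩
      have hBsum := (svt_feas_iff B).mp hB
      have hCfeas := svt_conj_feas U V B hU.1 hV.2 hBsum
      rw [hZh, svt_trace_conj, svt_trace_form, htrZhW]
      apply Finset.sum_le_sum; intro i _
      apply Finset.sum_le_sum; intro j _
      by_cases hd : Dh i j = 0
      · simp [hd]
      · have hd0 : 0 < Dh i j := by
          rcases lt_or_eq_of_le (le_max_right (S i j - 1/c) 0) with h | h
          · exact h
          · exact absurd h.symm hd
        have hSgt : 1/c < S i j := by
          by_contra h
          push_neg at h
          exact hd (max_eq_right (by linarith))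
        have hE1 : E i j = 1 := by
          have hdh : Dh i j = S i j - 1/c := max_eq_left (by linarith)
          show c * (S i j - Dh i j) = 1
          rw [hdh]
          have h1 : c * (S i j - (S i j - 1/c)) = c * (1/c) := by ring
          rw [h1, hcinv]
        have hCle : (Uᵀ * B * V) i j ≤ 1 := by
          have := svt_entry_bound _ hCfeas i j
          exact le_trans (le_abs_self _) this
        rw [hE1]
        exact mul_le_mul_of_nonneg_left hCle hd0.le
  -- relation W = c • (M - Zh), entrywise
  have hWent : ∀ i j, W i j = c * (M i j - Zh i j) := by
    intro i j
    have hmat : W = c • (M - Zh) := by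
      rw [hW, hM, hZh]
      have : E = c • (S - Dh) := by
        ext i' j'; simp [hE]
      rw [this]
      rw [Matrix.mul_smul, Matrix.smul_mul]
      rw [Matrix.mul_sub, Matrix.sub_mul]
    rw [hmat]; simp [Matrix.sub_apply]
  -- quadratic expansion
  have hquad : c/2 * (∑ i, ∑ j, (Z i j - M i j)^2)
      = c/2 * (∑ i, ∑ j, (Zh i j - M i j)^2) + c/2 * (∑ i, ∑ j, (Z i j - Zh i j)^2)
        - (Matrix.trace (Zᵀ * W) - Matrix.trace (Zhᵀ * W)) := by
    rw [svt_trace_form, svt_trace_form]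
    simp only [Finset.mul_sum, ← Finset.sum_add_distrib, ← Finset.sum_sub_distrib]
    apply Finset.sum_congr rfl; intro i _
    apply Finset.sum_congr rfl; intro j _
    rw [hWent i j]
    ring
  -- strict positivity of the squared distance
  have hpos : 0 < ∑ i, ∑ j, (Z i j - Zh i j)^2 := by
    rcases lt_or_eq_of_le (Finset.sum_nonneg fun i _ =>
      Finset.sum_nonneg fun j _ => sq_nonneg (Z i j - Zh i j)) with h | h
    · exact h
    · exfalso
      apply hZ
      ext i j
      have h1 := (Finset.sum_eq_zero_iff_of_nonneg fun i _ =>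
        Finset.sum_nonneg fun j _ => sq_nonneg (Z i j - Zh i j)).mp h.symm i (Finset.mem_univ i)
      have h2 := (Finset.sum_eq_zero_iff_of_nonneg fun j _ =>
        sq_nonneg (Z i j - Zh i j)).mp h1 j (Finset.mem_univ j)
      have h3 := sq_eq_zero_iff.mp h2
      have h4 : Z i j = Zh i j := by linarith
      exact h4
  -- final assembly
  have hlowZ := hlow Z
  have hD2 : 0 < c/2 * ∑ i, ∑ j, (Z i j - Zh i j)^2 := by positivity
  linarith [hquad, hup, hlowZ, hD2]
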